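/- Let a, c be positive integers with a ≠ c and b, d be integers. Then there exist a completely multiplicative unimodular function f, a real ε > 0, and a positive integer N such that for every n ≥ N one has a n + b ≥ 1, c n + d ≥ 1, and |f(a n + b) − f(c n + d)| ≥ ε; in particular liminf_{n→∞} |f(a n + b) − f(c n + d)| > 0. -/

import Mathlib

open MeasureTheory Filter

/-- `f` is completely multiplicative and unimodular on the positive integers. -/
def CompMultUnimodular (f : ℕ → ℂ) : Prop :=
  (∀ n : ℕ, 1 ≤ n → ‖f n‖ = 1) ∧
  (∀ m n : ℕ, 1 ≤ m → 1 ≤ n → f (m * n) = f m * f n)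

theorem separation_of_ne
    (a c : ℕ) (ha : 0 < a) (hc : 0 < c) (hne : a ≠ c) (b d : ℤ) :
    ∃ f : ℕ → ℂ, CompMultUnimodular f ∧ ∃ ε : ℝ, 0 < ε ∧ ∃ N : ℕ, 0 < N ∧
      ∀ n : ℕ, N ≤ n → 1 ≤ (a : ℤ) * n + b ∧ 1 ≤ (c : ℤ) * n + d ∧
        ε ≤ ‖f (((a : ℤ) * n + b).toNat) - f (((c : ℤ) * n + d).toNat)‖ := by
  have haR : (0:ℝ) < (a:ℝ) := by exact_mod_cast ha
  have hcR : (0:ℝ) < (c:ℝ) := by exact_mod_cast hc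
  have hlog_ne : Real.log a - Real.log c ≠ 0 := by
    intro h
    apply hne
    have := Real.log_injOn_pos (Set.mem_Ioi.mpr haR) (Set.mem_Ioi.mpr hcR) (by linarith)
    exact_mod_cast this
  set t : ℝ := Real.pi / (Real.log a - Real.log c) with ht
  set f : ℕ → ℂ := fun n => Complex.exp ((t * Real.log n : ℝ) * Complex.I) with hf
  refine ⟨f, ⟨?_, ?_⟩, 1, one_pos, ?_⟩
  · intro n _
    exact Complex.norm_exp_ofReal_mul_I _
  · intro m n hm hn
    have hm0 : (m:ℝ) ≠ 0 := by positivity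
    have hn0 : (n:ℝ) ≠ 0 := by positivity
    simp only [hf]
    rw [← Complex.exp_add]
    congr 1
    push_cast [Real.log_mul hm0 hn0]
    ring
  -- limits
  · have hA : Tendsto (fun n : ℕ => (a:ℤ) * n + b) atTop atTop := by
      have h1 : Tendsto (fun n : ℕ => (n:ℤ)) atTop atTop := tendsto_natCast_atTop_atTop
      exact tendsto_atTop_add_const_right _ b
        (h1.const_mul_atTop' (show (0:ℤ) < (a:ℤ) by exact_mod_cast ha))
    have hC : Tendsto (fun n : ℕ => (c:ℤ) * n + d) atTop atTop := by
      have h1 : Tendsto (fun n : ℕ => (n:ℤ)) atTop atTop := tendsto_natCast_atTop_atTop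
      exact tendsto_atTop_add_const_right _ d
        (h1.const_mul_atTop' (show (0:ℤ) < (c:ℤ) by exact_mod_cast hc))
    have hA1 : ∀ᶠ n : ℕ in atTop, 1 ≤ (a:ℤ) * n + b := hA.eventually_ge_atTop 1
    have hC1 : ∀ᶠ n : ℕ in atTop, 1 ≤ (c:ℤ) * n + d := hC.eventually_ge_atTop 1
    -- ratio tendsto
    have hbn : Tendsto (fun n : ℕ => (b:ℝ) / n) atTop (nhds 0) :=
      Tendsto.div_atTop tendsto_const_nhds tendsto_natCast_atTop_atTop
    have hdn : Tendsto (fun n : ℕ => (d:ℝ) / n) atTop (nhds 0) :=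
      Tendsto.div_atTop tendsto_const_nhds tendsto_natCast_atTop_atTop
    have hnum : Tendsto (fun n : ℕ => (a:ℝ) + (b:ℝ) / n) atTop (nhds ((a:ℝ))) := by
      simpa using tendsto_const_nhds.add hbn
    have hden : Tendsto (fun n : ℕ => (c:ℝ) + (d:ℝ) / n) atTop (nhds ((c:ℝ))) := by
      simpa using tendsto_const_nhds.add hdn
    have hratio : Tendsto (fun n : ℕ => ((a:ℝ) + (b:ℝ) / n) / ((c:ℝ) + (d:ℝ) / n)) atTop
        (nhds ((a:ℝ) / (c:ℝ))) := hnum.div hden (ne_of_gt hcR)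
    have hlograt : Tendsto (fun n : ℕ => Real.log (((a:ℝ) + (b:ℝ) / n) / ((c:ℝ) + (d:ℝ) / n)))
        atTop (nhds (Real.log a - Real.log c)) := by
      have : Tendsto (fun n : ℕ => Real.log (((a:ℝ) + (b:ℝ) / n) / ((c:ℝ) + (d:ℝ) / n)))
          atTop (nhds (Real.log ((a:ℝ) / (c:ℝ)))) :=
        ((Real.continuousAt_log (by positivity)).tendsto).comp hratio
      rwa [Real.log_div (ne_of_gt haR) (ne_of_gt hcR)] at this
    -- L n := log(an+b) - log(cn+d), eventually equal to the above
    have hLeq : ∀ᶠ n : ℕ in atTop,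
        Real.log (((a:ℤ) * n + b : ℤ) : ℝ) - Real.log (((c:ℤ) * n + d : ℤ) : ℝ)
          = Real.log (((a:ℝ) + (b:ℝ) / n) / ((c:ℝ) + (d:ℝ) / n)) := by
      filter_upwards [hA1, hC1, eventually_ge_atTop 1] with n h1 h2 h3
      have hn0 : (0:ℝ) < (n:ℝ) := by exact_mod_cast h3
      have hx : (0:ℝ) < (((a:ℤ) * n + b : ℤ) : ℝ) := by exact_mod_cast h1
      have hy : (0:ℝ) < (((c:ℤ) * n + d : ℤ) : ℝ) := by exact_mod_cast h2
      rw [← Real.log_div (ne_of_gt hx) (ne_of_gt hy)]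
      congr 1
      push_cast
      field_simp
    have hL : Tendsto (fun n : ℕ =>
        Real.log (((a:ℤ) * n + b : ℤ) : ℝ) - Real.log (((c:ℤ) * n + d : ℤ) : ℝ)) atTop
        (nhds (Real.log a - Real.log c)) :=
      hlograt.congr' (hLeq.mono fun n h => h.symm)
    have htL : Tendsto (fun n : ℕ => t *
        (Real.log (((a:ℤ) * n + b : ℤ) : ℝ) - Real.log (((c:ℤ) * n + d : ℤ) : ℝ))) atTop
        (nhds Real.pi) := by
      have := hL.const_mul t
      rwa [ht, div_mul_cancel₀ _ hlog_ne] at this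
    -- the distance function
    have hcont : Continuous (fun θ : ℝ => ‖Complex.exp ((θ:ℂ) * Complex.I) - 1‖) :=
      continuous_norm.comp
        ((Complex.continuous_exp.comp (Complex.continuous_ofReal.mul continuous_const)).sub
          continuous_const)
    have hDist : Tendsto (fun n : ℕ => ‖Complex.exp
        (((t * (Real.log (((a:ℤ) * n + b : ℤ) : ℝ) - Real.log (((c:ℤ) * n + d : ℤ) : ℝ)) : ℝ) : ℂ)
          * Complex.I) - 1‖) atTop
        (nhds (‖Complex.exp ((Real.pi : ℂ) * Complex.I) - 1‖)) :=
      (hcont.tendsto _).comp htL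
    have hval : ‖Complex.exp ((Real.pi : ℂ) * Complex.I) - 1‖ = 2 := by
      rw [Complex.exp_pi_mul_I]
      norm_num
    rw [hval] at hDist
    have hge : ∀ᶠ n : ℕ in atTop, 1 ≤ ‖Complex.exp
        (((t * (Real.log (((a:ℤ) * n + b : ℤ) : ℝ) - Real.log (((c:ℤ) * n + d : ℤ) : ℝ)) : ℝ) : ℂ)
          * Complex.I) - 1‖ :=
      hDist.eventually (eventually_ge_nhds (by norm_num))
    obtain ⟨N₀, hN₀⟩ := eventually_atTop.mp (hA1.and (hC1.and hge))
    refine ⟨max N₀ 1, lt_of_lt_of_le one_pos (le_max_right _ _), ?_⟩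
    intro n hn
    obtain ⟨h1, h2, h3⟩ := hN₀ n (le_trans (le_max_left _ _) hn)
    refine ⟨h1, h2, ?_⟩
    -- rewrite f X - f Y
    set X := ((a:ℤ) * n + b).toNat with hX
    set Y := ((c:ℤ) * n + d).toNat with hY
    have hXr : ((X:ℝ)) = (((a:ℤ) * n + b : ℤ) : ℝ) := by
      rw [hX]; exact_mod_cast congrArg (Int.cast : ℤ → ℝ) (Int.toNat_of_nonneg (by push_cast; linarith))
    have hYr : ((Y:ℝ)) = (((c:ℤ) * n + d : ℤ) : ℝ) := by
      rw [hY]; exact_mod_cast congrArg (Int.cast : ℤ → ℝ) (Int.toNat_of_nonneg (by push_cast; linarith))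
    have key : f X - f Y = Complex.exp ((t * Real.log Y : ℝ) * Complex.I) *
        (Complex.exp (((t * (Real.log (((a:ℤ) * n + b : ℤ) : ℝ)
          - Real.log (((c:ℤ) * n + d : ℤ) : ℝ)) : ℝ) : ℂ) * Complex.I) - 1) := by
      rw [hf]
      simp only [mul_sub, mul_one, ← Complex.exp_add]
      rw [hXr, hYr]
      congr 2
      push_cast
      ring
    rw [key, norm_mul, Complex.norm_exp_ofReal_mul_I, one_mul]
    exact h3
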